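/- For subsets A, B ⊆ [n] = {1,…,n}, write A ⊑ B if there exists a semistandard Young tableau with two columns whose first column has entry set A and second column has entry set B; equivalently, A ⊑ B iff #A ≥ #B and A(k) ≤ B(k) for all k ∈ [#B], where A(k) denotes the k-th smallest element of A. Then for nonempty C, D ⊆ [n], C ⊑ D if and only if [n]∖D ⊑ [n]∖C. -/

import Mathlib

/-- The `k`-th smallest element of a finite set of naturals (0-indexed), with junk
value `0` when `k ≥ #A`. -/
def nthSmall (A : Finset ℕ) (k : ℕ) : ℕ := (A.sort (· ≤ ·)).getD k 0

/-- The tableau (Gale) order: `A ⊑ B` iff `#A ≥ #B` and the `k`-th smallest element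
of `A` is at most the `k`-th smallest element of `B` for all `k < #B`; equivalently,
there is a two-column semistandard tableau with column entry sets `A` and `B`. -/
def galeLe (A B : Finset ℕ) : Prop :=
  B.card ≤ A.card ∧ ∀ k < B.card, nthSmall A k ≤ nthSmall B k

lemma nthSmall_mem {A : Finset ℕ} {k : ℕ} (hk : k < A.card) : nthSmall A k ∈ A := by
  rw [← Finset.mem_sort (· ≤ ·), nthSmall, List.getD_eq_getElem _ _ (by simpa using hk)]
  exact List.getElem_mem _

lemma nthSmall_lt {A : Finset ℕ} {k l : ℕ} (hkl : k < l) (hl : l < A.card) :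
    nthSmall A k < nthSmall A l := by
  have hs := (Finset.sortedLT_sort A).pairwise
  rw [nthSmall, nthSmall, List.getD_eq_getElem _ _ (by simp; omega),
    List.getD_eq_getElem _ _ (by simpa using hl)]
  exact List.pairwise_iff_get.mp hs ⟨k, by simp; omega⟩ ⟨l, by simpa using hl⟩ hkl

lemma exists_nthSmall {A : Finset ℕ} {a : ℕ} (ha : a ∈ A) :
    ∃ k < A.card, nthSmall A k = a := by
  rw [← Finset.mem_sort (· ≤ ·), List.mem_iff_get] at ha
  obtain ⟨i, hi⟩ := ha
  refine ⟨i, by simpa using i.2, ?_⟩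
  rw [nthSmall, List.getD_eq_getElem _ _ (by simpa using i.2)]
  simpa using hi

lemma nthSmall_le_iff {A : Finset ℕ} {k : ℕ} (hk : k < A.card) (x : ℕ) :
    nthSmall A k ≤ x ↔ k < (A.filter (· ≤ x)).card := by
  constructor
  · intro h
    have hsub : (Finset.range (k + 1)).image (nthSmall A) ⊆ A.filter (· ≤ x) := by
      intro a ha
      simp only [Finset.mem_image, Finset.mem_range] at ha
      obtain ⟨j, hj, rfl⟩ := ha
      refine Finset.mem_filter.mpr ⟨nthSmall_mem (by omega), ?_⟩
      rcases eq_or_lt_of_le (Nat.lt_succ_iff.mp hj) with rfl | hjk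
      · exact h
      · exact le_of_lt (lt_of_lt_of_le (nthSmall_lt hjk hk) h)
    have hinj : Set.InjOn (nthSmall A) (Finset.range (k + 1)) := by
      intro a ha b hb hab
      simp only [Finset.coe_range, Set.mem_Iio] at ha hb
      by_contra hne
      rcases Nat.lt_or_ge a b with h' | h'
      · exact absurd hab (ne_of_lt (nthSmall_lt h' (by omega)))
      · exact absurd hab.symm (ne_of_lt (nthSmall_lt (by omega) (by omega)))
    have := Finset.card_le_card hsub
    rwa [Finset.card_image_of_injOn hinj, Finset.card_range, Nat.succ_le_iff] at this
  · intro h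
    by_contra hx
    push_neg at hx
    have hsub : A.filter (· ≤ x) ⊆ (Finset.range k).image (nthSmall A) := by
      intro a ha
      rw [Finset.mem_filter] at ha
      obtain ⟨j, hjA, rfl⟩ := exists_nthSmall ha.1
      refine Finset.mem_image.mpr ⟨j, Finset.mem_range.mpr ?_, rfl⟩
      by_contra hjk
      push_neg at hjk
      rcases eq_or_lt_of_le hjk with rfl | hlt
      · exact absurd ha.2 (not_le.mpr hx)
      · have := nthSmall_lt hlt hjA
        omega
    have h1 := Finset.card_le_card hsub
    have h2 : ((Finset.range k).image (nthSmall A)).card ≤ k :=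
      le_trans Finset.card_image_le (by simp)
    omega

lemma galeLe_iff_count (A B : Finset ℕ) :
    galeLe A B ↔ ∀ x, (B.filter (· ≤ x)).card ≤ (A.filter (· ≤ x)).card := by
  constructor
  · rintro ⟨hcard, hle⟩ x
    set m := (B.filter (· ≤ x)).card with hm
    rcases Nat.eq_zero_or_pos m with h0 | hpos
    · omega
    have hmB : m ≤ B.card := Finset.card_le_card (Finset.filter_subset _ _)
    have h1 : m - 1 < B.card := by omega
    have hBx : nthSmall B (m - 1) ≤ x := (nthSmall_le_iff h1 x).mpr (by omega)
    have hAx : nthSmall A (m - 1) ≤ x := le_trans (hle _ h1) hBx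
    have := (nthSmall_le_iff (lt_of_lt_of_le h1 hcard) x).mp hAx
    omega
  · intro h
    have hcard : B.card ≤ A.card := by
      have hthis := h ((A ∪ B).sup id)
      have hB : Finset.filter (fun y => y ≤ (A ∪ B).sup id) B = B :=
        Finset.filter_true_of_mem fun b hb =>
          Finset.le_sup (f := id) (Finset.mem_union_right _ hb)
      have hA : Finset.filter (fun y => y ≤ (A ∪ B).sup id) A = A :=
        Finset.filter_true_of_mem fun a ha =>
          Finset.le_sup (f := id) (Finset.mem_union_left _ ha)
      rwa [hA, hB] at hthis
    refine ⟨hcard, fun k hk => ?_⟩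
    rw [nthSmall_le_iff (lt_of_lt_of_le hk hcard)]
    exact lt_of_lt_of_le ((nthSmall_le_iff hk _).mp le_rfl) (h _)

/-- For nonempty `C, D ⊆ [n]`: `C ⊑ D` iff `[n]∖D ⊑ [n]∖C`. -/
theorem stmt_5 (n : ℕ) (C D : Finset ℕ) (hC : C.Nonempty) (hD : D.Nonempty)
    (hCs : C ⊆ Finset.Icc 1 n) (hDs : D ⊆ Finset.Icc 1 n) :
    galeLe C D ↔ galeLe (Finset.Icc 1 n \ D) (Finset.Icc 1 n \ C) := by
  rw [galeLe_iff_count, galeLe_iff_count]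
  have key : ∀ (S : Finset ℕ), S ⊆ Finset.Icc 1 n → ∀ x,
      ((Finset.Icc 1 n \ S).filter (· ≤ x)).card =
        ((Finset.Icc 1 n).filter (· ≤ x)).card - (S.filter (· ≤ x)).card := by
    intro S hS x
    have heq : (Finset.Icc 1 n \ S).filter (· ≤ x) =
        (Finset.Icc 1 n).filter (· ≤ x) \ S.filter (· ≤ x) := by
      ext a
      simp only [Finset.mem_filter, Finset.mem_sdiff]
      tauto
    rw [heq, Finset.card_sdiff_of_subset (Finset.filter_subset_filter _ hS)]
  constructor
  · intro h x
    rw [key C hCs, key D hDs]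
    have hc : (C.filter (· ≤ x)).card ≤ ((Finset.Icc 1 n).filter (· ≤ x)).card :=
      Finset.card_le_card (Finset.filter_subset_filter _ hCs)
    have hd : (D.filter (· ≤ x)).card ≤ ((Finset.Icc 1 n).filter (· ≤ x)).card :=
      Finset.card_le_card (Finset.filter_subset_filter _ hDs)
    have := h x
    omega
  · intro h x
    have := h x
    rw [key C hCs, key D hDs] at this
    have hc : (C.filter (· ≤ x)).card ≤ ((Finset.Icc 1 n).filter (· ≤ x)).card :=
      Finset.card_le_card (Finset.filter_subset_filter _ hCs)
    have hd : (D.filter (· ≤ x)).card ≤ ((Finset.Icc 1 n).filter (· ≤ x)).card :=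
      Finset.card_le_card (Finset.filter_subset_filter _ hDs)
    omega
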